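/- Let A be a dual Banach algebra with predual A₊ and a bounded approximate identity. If the bidual A** (with the first Arens product) is ideally amenable, then A is ideally amenable. -/

import Mathlib

set_option synthInstance.maxHeartbeats 400000
set_option maxHeartbeats 800000

namespace NormedSpace

/-- The topological dual of a normed space, as `NormedSpace.Dual` was defined in the older Mathlib. -/
abbrev Dual (𝕜 : Type*) [NontriviallyNormedField 𝕜] (E : Type*) [SeminormedAddCommGroup E]
    [NormedSpace 𝕜 E] : Type _ :=
  E →L[𝕜] 𝕜

end NormedSpace

open NormedSpace

noncomputable section

section GeneralProduct

variable {E : Type*} [NormedAddCommGroup E] [NormedSpace ℂ E]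

/-- A closed two-sided ideal of the Banach algebra `(E, p)`, where `p` is a given
(bounded bilinear) multiplication on the Banach space `E`. -/
structure IsClosedTwoSidedIdealW (p : E →L[ℂ] E →L[ℂ] E) (I : Submodule ℂ E) : Prop where
  isClosed : IsClosed (I : Set E)
  mul_left : ∀ (a : E) ⦃x : E⦄, x ∈ I → p a x ∈ I
  mul_right : ∀ (a : E) ⦃x : E⦄, x ∈ I → p x a ∈ I

/-- A derivation `(E, p) → I*` for the canonical dual bimodule actions. -/
def IsIdealDerivationW (p : E →L[ℂ] E →L[ℂ] E) (I : Submodule ℂ E)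
    (hI : IsClosedTwoSidedIdealW p I) (D : E →L[ℂ] Dual ℂ I) : Prop :=
  ∀ a b : E, ∀ i : I, D (p a b) i =
    D b ⟨p (i : E) a, hI.mul_right a i.2⟩ + D a ⟨p b (i : E), hI.mul_left b i.2⟩

/-- An inner derivation `(E, p) → I*`, i.e. `D = δ_ξ : a ↦ a·ξ - ξ·a`. -/
def IsInnerIdealDerivationW (p : E →L[ℂ] E →L[ℂ] E) (I : Submodule ℂ E)
    (hI : IsClosedTwoSidedIdealW p I) (D : E →L[ℂ] Dual ℂ I) : Prop :=
  ∃ ξ : Dual ℂ I, ∀ (a : E) (i : I),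
    D a i = ξ ⟨p (i : E) a, hI.mul_right a i.2⟩ - ξ ⟨p a (i : E), hI.mul_left a i.2⟩

/-- The Banach algebra `(E, p)` is ideally amenable. -/
def IdeallyAmenableW (p : E →L[ℂ] E →L[ℂ] E) : Prop :=
  ∀ (I : Submodule ℂ E) (hI : IsClosedTwoSidedIdealW p I) (D : E →L[ℂ] Dual ℂ I),
    IsIdealDerivationW p I hI D → IsInnerIdealDerivationW p I hI D

/-- The transpose adjoint of a bounded bilinear map: `⟨f*(z*, x), y⟩ = ⟨z*, f(x, y)⟩`. -/
def trAdj {X Y Z : Type*} [NormedAddCommGroup X] [NormedSpace ℂ X]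
    [NormedAddCommGroup Y] [NormedSpace ℂ Y] [NormedAddCommGroup Z] [NormedSpace ℂ Z]
    (f : X →L[ℂ] Y →L[ℂ] Z) : Dual ℂ Z →L[ℂ] X →L[ℂ] Dual ℂ Y :=
  (((ContinuousLinearMap.compL ℂ X (Y →L[ℂ] Z) (Dual ℂ Y)).comp
      (ContinuousLinearMap.compL ℂ Y Z ℂ)).flip) f

/-- The first Arens extension `f*** : X** × Y** → Z**`. -/
def arens3 {X Y Z : Type*} [NormedAddCommGroup X] [NormedSpace ℂ X]
    [NormedAddCommGroup Y] [NormedSpace ℂ Y] [NormedAddCommGroup Z] [NormedSpace ℂ Z]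
    (f : X →L[ℂ] Y →L[ℂ] Z) :
    Dual ℂ (Dual ℂ X) →L[ℂ] Dual ℂ (Dual ℂ Y) →L[ℂ] Dual ℂ (Dual ℂ Z) :=
  trAdj (trAdj (trAdj f))

end GeneralProduct

/-- `A` has a bounded approximate identity. -/
def HasBAI (A : Type*) [NonUnitalNormedRing A] : Prop :=
  ∃ l : Filter A, l.NeBot ∧ (∃ C : ℝ, ∀ᶠ e in l, ‖e‖ ≤ C) ∧
    ∀ a : A, Filter.Tendsto (fun e => a * e) l (nhds a) ∧
      Filter.Tendsto (fun e => e * a) l (nhds a)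


section AuxiliaryForStatement9

set_option linter.unusedSectionVars false

lemma wstar_rep {P : Type*} [NormedAddCommGroup P] [NormedSpace ℂ P]
    (φ : Dual ℂ P →ₗ[ℂ] ℂ)
    (hφ : Continuous fun f : WeakDual ℂ P => φ (WeakDual.toStrongDual f)) :
    ∃ q : P, ∀ f : Dual ℂ P, φ f = f q := by
  classical
  have h0 : Filter.Tendsto (fun f : WeakDual ℂ P => φ (WeakDual.toStrongDual f))
      (nhds 0) (nhds 0) := by
    have := hφ.tendsto (0 : WeakDual ℂ P)
    simpa using this
  have hball : (fun f : WeakDual ℂ P => φ (WeakDual.toStrongDual f)) ⁻¹' Metric.ball 0 1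
      ∈ nhds (0 : WeakDual ℂ P) := h0 (Metric.ball_mem_nhds 0 one_pos)
  have hbasis := LinearMap.hasBasis_weakBilin (topDualPairing ℂ P)
  replace hball := hbasis.mem_iff.1 hball
  obtain ⟨U, hU, hUsub⟩ := hball
  obtain ⟨s, r, hr, rfl⟩ := (SeminormFamily.basisSets_iff _).1 hU
  have hker : ∀ f : Dual ℂ P, (∀ p ∈ s, f p = 0) → φ f = 0 := by
    intro f hf
    by_contra hne
    obtain ⟨c, hc⟩ : ∃ c : ℂ, 1 < ‖φ (c • f)‖ := by
      refine ⟨(2 / ‖φ f‖ : ℝ), ?_⟩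
      have hpos : 0 < ‖φ f‖ := norm_pos_iff.2 hne
      rw [map_smul, smul_eq_mul, norm_mul]
      rw [Complex.norm_real, Real.norm_eq_abs, abs_of_pos (by positivity)]
      rw [div_mul_cancel₀ _ (ne_of_gt hpos)]
      norm_num
    have hmem : (c • f : Dual ℂ P) ∈ (s.sup (topDualPairing ℂ P).toSeminormFamily).ball 0 r := by
      rw [Seminorm.mem_ball_zero]
      refine Seminorm.finset_sup_apply_lt hr ?_
      intro p hp
      have : (topDualPairing ℂ P).toSeminormFamily p (c • f) = 0 := by
        simp [LinearMap.toSeminormFamily, LinearMap.toSeminorm, topDualPairing, hf p hp]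
      rw [this]; exact hr
    have : φ (c • f) ∈ Metric.ball (0 : ℂ) 1 := hUsub hmem
    simp only [Set.mem_preimage, Metric.mem_ball, dist_zero_right] at this
    exact absurd this (not_lt.2 (le_of_lt hc))
  have hincl : ⨅ p : s, LinearMap.ker ((topDualPairing ℂ P).flip (p : P)) ≤ LinearMap.ker φ := by
    intro f hf
    rw [LinearMap.mem_ker]
    refine hker f fun p hp => ?_
    have := (Submodule.mem_iInf _).1 hf ⟨p, hp⟩
    simpa [topDualPairing] using this
  have hspan := mem_span_of_iInf_ker_le_ker (𝕜 := ℂ) hincl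
  obtain ⟨cf, hcf⟩ := (Submodule.mem_span_range_iff_exists_fun ℂ).1 hspan
  refine ⟨∑ p : s, cf p • (p : P), fun f => ?_⟩
  have := congrFun (congrArg (fun g : Dual ℂ P →ₗ[ℂ] ℂ => (g : Dual ℂ P → ℂ)) hcf) f
  simp only [LinearMap.coe_sum, Finset.sum_apply, LinearMap.smul_apply] at this
  rw [← this, map_sum]
  congr 1
  ext p
  simp [topDualPairing]

variable {A : Type*} [NonUnitalNormedRing A] [NormedSpace ℂ A]
    [IsScalarTower ℂ A A] [SMulCommClass ℂ A A]
    {P : Type*} [NormedAddCommGroup P] [NormedSpace ℂ P]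

/-- `P ⊆ A*` via `e`. -/
def iotaP (e : A ≃ₗᵢ[ℂ] Dual ℂ P) : P →L[ℂ] Dual ℂ A :=
  (e.toLinearIsometry.toContinuousLinearMap).flip

@[simp] lemma iotaP_apply (e : A ≃ₗᵢ[ℂ] Dual ℂ P) (p : P) (a : A) :
    iotaP e p a = e a p := rfl

/-- The canonical projection `A** → A` coming from the predual. -/
def piA (e : A ≃ₗᵢ[ℂ] Dual ℂ P) : Dual ℂ (Dual ℂ A) →L[ℂ] A :=
  (e.symm.toLinearIsometry.toContinuousLinearMap).comp
    ((ContinuousLinearMap.compL ℂ P (Dual ℂ A) ℂ).flip (iotaP e))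

@[simp] lemma e_piA (e : A ≃ₗᵢ[ℂ] Dual ℂ P) (M : Dual ℂ (Dual ℂ A)) (p : P) :
    e (piA e M) p = M (iotaP e p) := by simp [piA]

@[simp] lemma piA_inclusion (e : A ≃ₗᵢ[ℂ] Dual ℂ P) (a : A) :
    piA e (inclusionInDoubleDual ℂ A a) = a := by
  apply e.injective
  ext p
  simp [inclusionInDoubleDual]

lemma arens3_inclusion (x y : A) :
    arens3 (ContinuousLinearMap.mul ℂ A) (inclusionInDoubleDual ℂ A x)
      (inclusionInDoubleDual ℂ A y) = inclusionInDoubleDual ℂ A (x * y) := by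
  ext f
  rfl

variable (e : A ≃ₗᵢ[ℂ] Dual ℂ P)
  (hw : ∀ a : A,
      Continuous (fun m : WeakDual ℂ P =>
        StrongDual.toWeakDual (e (a * e.symm (WeakDual.toStrongDual m)))) ∧
      Continuous (fun m : WeakDual ℂ P =>
        StrongDual.toWeakDual (e (e.symm (WeakDual.toStrongDual m) * a))))

include hw in
lemma exists_left_rep (a : A) (p : P) : ∃ q : P, ∀ y : A, e (a * y) p = e y q := by
  obtain ⟨q, hq⟩ := wstar_rep
    { toFun := fun f => e (a * e.symm f) p
      map_add' := fun f g => by simp [mul_add]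
      map_smul' := fun c f => by simp [mul_smul_comm] }
    ((WeakDual.eval_continuous (𝕜 := ℂ) (E := P) p).comp (hw a).1)
  exact ⟨q, fun y => by simpa using hq (e y)⟩

include hw in
lemma exists_right_rep (a : A) (p : P) : ∃ q : P, ∀ x : A, e (x * a) p = e x q := by
  obtain ⟨q, hq⟩ := wstar_rep
    { toFun := fun f => e (e.symm f * a) p
      map_add' := fun f g => by simp [add_mul]
      map_smul' := fun c f => by simp [smul_mul_assoc] }
    ((WeakDual.eval_continuous (𝕜 := ℂ) (E := P) p).comp (hw a).2)
  exact ⟨q, fun x => by simpa using hq (e x)⟩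

include hw in
/-- The projection `piA e` is multiplicative for the first Arens product. -/
lemma piA_mul (M N : Dual ℂ (Dual ℂ A)) :
    piA e (arens3 (ContinuousLinearMap.mul ℂ A) M N) = piA e M * piA e N := by
  apply e.injective
  ext p
  rw [e_piA]
  obtain ⟨q', hq'⟩ := exists_right_rep e hw (piA e N) p
  have hT2 : trAdj (trAdj (ContinuousLinearMap.mul ℂ A)) N (iotaP e p) = iotaP e q' := by
    ext x
    obtain ⟨q, hq⟩ := exists_left_rep e hw x p
    have h1 : trAdj (ContinuousLinearMap.mul ℂ A) (iotaP e p) x = iotaP e q := by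
      ext y
      show iotaP e p (x * y) = iotaP e q y
      rw [iotaP_apply, iotaP_apply, hq y]
    calc trAdj (trAdj (ContinuousLinearMap.mul ℂ A)) N (iotaP e p) x
        = N (trAdj (ContinuousLinearMap.mul ℂ A) (iotaP e p) x) := rfl
      _ = N (iotaP e q) := by rw [h1]
      _ = e (piA e N) q := (e_piA e N q).symm
      _ = e (x * piA e N) p := (hq _).symm
      _ = iotaP e q' x := by rw [hq' x, iotaP_apply]
  calc arens3 (ContinuousLinearMap.mul ℂ A) M N (iotaP e p)
      = M (trAdj (trAdj (ContinuousLinearMap.mul ℂ A)) N (iotaP e p)) := rfl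
    _ = M (iotaP e q') := by rw [hT2]
    _ = e (piA e M) q' := (e_piA e M q').symm
    _ = e (piA e M * piA e N) p := (hq' _).symm

end AuxiliaryForStatement9

/-- Let `A` be a dual Banach algebra (with predual `P`, so `A ≅ P*`
isometrically and multiplication is separately weak*-continuous) having a bounded
approximate identity.  If the bidual `A**` with the first Arens product is ideally
amenable, then `A` is ideally amenable. -/
theorem ideallyAmenable_of_bidual_dualBanachAlgebra
    {A : Type*} [NonUnitalNormedRing A] [NormedSpace ℂ A]
    [IsScalarTower ℂ A A] [SMulCommClass ℂ A A] [CompleteSpace A]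
    {P : Type*} [NormedAddCommGroup P] [NormedSpace ℂ P] [CompleteSpace P]
    (e : A ≃ₗᵢ[ℂ] Dual ℂ P)
    (hw : ∀ a : A,
      Continuous (fun m : WeakDual ℂ P =>
        StrongDual.toWeakDual (e (a * e.symm (WeakDual.toStrongDual m)))) ∧
      Continuous (fun m : WeakDual ℂ P =>
        StrongDual.toWeakDual (e (e.symm (WeakDual.toStrongDual m) * a))))
    (hBAI : HasBAI A)
    (hbidual : IdeallyAmenableW (E := Dual ℂ (Dual ℂ A)) (arens3 (X := A) (Y := A) (Z := A) (ContinuousLinearMap.mul ℂ A))) :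
    IdeallyAmenableW (E := A) (ContinuousLinearMap.mul ℂ A) := by
  classical
  intro I hI D hD
  let κ : A →L[ℂ] Dual ℂ (Dual ℂ A) := inclusionInDoubleDual ℂ A
  -- the preimage ideal in A**
  let J : Submodule ℂ (Dual ℂ (Dual ℂ A)) :=
    I.comap (piA e).toLinearMap
  have hJ : IsClosedTwoSidedIdealW (E := Dual ℂ (Dual ℂ A)) (arens3 (X := A) (Y := A) (Z := A) (ContinuousLinearMap.mul ℂ A)) J := by
    refine ⟨?_, ?_, ?_⟩
    · show IsClosed ((piA e) ⁻¹' (I : Set A))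
      exact hI.isClosed.preimage (piA e).continuous
    · intro M N hN
      show piA e (arens3 (X := A) (Y := A) (Z := A) (ContinuousLinearMap.mul ℂ A) M N) ∈ I
      rw [piA_mul e hw]
      exact hI.mul_left _ hN
    · intro M N hN
      show piA e (arens3 (X := A) (Y := A) (Z := A) (ContinuousLinearMap.mul ℂ A) N M) ∈ I
      rw [piA_mul e hw]
      exact hI.mul_right _ hN
  -- restriction of the projection to a map J → I
  let ρ : J →L[ℂ] I := ((piA e).comp J.subtypeL).codRestrict I (fun x => x.2)
  -- the lifted derivation A** → J*
  let Dt : Dual ℂ (Dual ℂ A) →L[ℂ] Dual ℂ J :=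
    ((ContinuousLinearMap.compL ℂ J I ℂ).flip ρ).comp (D.comp (piA e))
  have Dt_apply : ∀ (M : Dual ℂ (Dual ℂ A)) (x : J), Dt M x = D (piA e M) (ρ x) :=
    fun M x => rfl
  have hDt : IsIdealDerivationW (E := Dual ℂ (Dual ℂ A)) (arens3 (X := A) (Y := A) (Z := A) (ContinuousLinearMap.mul ℂ A)) J hJ Dt := by
    intro M N j
    have key := hD (piA e M) (piA e N) (ρ j)
    rw [Dt_apply, Dt_apply, Dt_apply]
    have g1 : piA e (arens3 (X := A) (Y := A) (Z := A) (ContinuousLinearMap.mul ℂ A) M N)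
        = ContinuousLinearMap.mul ℂ A (piA e M) (piA e N) := piA_mul e hw M N
    rw [g1, key]
    congr 1
    · exact congrArg (D (piA e N)) (Subtype.ext (piA_mul e hw (↑j) M).symm)
    · exact congrArg (D (piA e M)) (Subtype.ext (piA_mul e hw N (↑j)).symm)
  obtain ⟨ξ, hξ⟩ := hbidual J hJ Dt hDt
  -- the embedding I → J
  let σ : I →L[ℂ] J := (κ.comp I.subtypeL).codRestrict J (fun i => by
    show piA e (κ (↑i)) ∈ I
    rw [show piA e (κ (↑i)) = (↑i : A) from piA_inclusion e (↑i)]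
    exact i.2)
  refine ⟨ξ.comp σ, fun a i => ?_⟩
  have key := hξ (κ a) (σ i)
  have lhs : Dt (κ a) (σ i) = D a i := by
    rw [Dt_apply]
    have l2 : ρ (σ i) = i := Subtype.ext (piA_inclusion e (↑i))
    rw [show piA e (κ a) = a from piA_inclusion e a, l2]
  rw [lhs] at key
  rw [key]
  have hσcoe : ∀ y : I, (↑(σ y) : Dual ℂ (Dual ℂ A)) = κ ↑y := fun y =>
    ContinuousLinearMap.coe_codRestrict_apply _ _ _ _
  have goal_eq : ∀ (x : J) (y : I), (↑x : Dual ℂ (Dual ℂ A)) = κ ↑y →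
      ξ x = (ξ.comp σ) y := by
    intro x y hxy
    rw [ContinuousLinearMap.comp_apply]
    exact congrArg ξ (Subtype.ext (by rw [hxy, hσcoe y]))
  refine congrArg₂ (· - ·) (goal_eq _ _ ?_) (goal_eq _ _ ?_)
  · simpa only [hσcoe i, ContinuousLinearMap.mul_apply'] using arens3_inclusion (↑i) a
  · simpa only [hσcoe i, ContinuousLinearMap.mul_apply'] using arens3_inclusion a (↑i)
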